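/- For n = 2 (so dim V = 4): ker Ξ₊ = V* ⊗ ℝψ₋ and ker Ξ₋ = V* ⊗ ℝψ₊, and the images coincide: Ξ₊(V* ⊗ ⟦λ^{2,0}⟧) = Ξ₋(V* ⊗ ⟦λ^{2,0}⟧) = V* ⊗ ℝω. -/

import Mathlib

noncomputable section

open scoped RealInnerProductSpace
open Function

namespace SUnPaper

variable {V : Type*} [NormedAddCommGroup V] [InnerProductSpace ℝ V]

/-- Wedge product of real-valued alternating forms. -/
def wedge {p q : ℕ} (a : V [⋀^Fin p]→ₗ[ℝ] ℝ) (b : V [⋀^Fin q]→ₗ[ℝ] ℝ) :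
    V [⋀^Fin (p + q)]→ₗ[ℝ] ℝ :=
  (((TensorProduct.lid ℝ ℝ).toLinearMap).compAlternatingMap (a.domCoprod b)).domDomCongr
    finSumFinEquiv

/-- Wedge product of complex-valued (ℝ-multilinear) alternating forms. -/
def cwedge {p q : ℕ} (a : V [⋀^Fin p]→ₗ[ℝ] ℂ) (b : V [⋀^Fin q]→ₗ[ℝ] ℂ) :
    V [⋀^Fin (p + q)]→ₗ[ℝ] ℂ :=
  ((LinearMap.mul' ℝ ℂ).compAlternatingMap (a.domCoprod b)).domDomCongr finSumFinEquiv

/-- The one-form `⟪·, x⟫` associated to a vector `x` via the metric. -/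
def oneForm (x : V) : V [⋀^Fin 1]→ₗ[ℝ] ℝ :=
  AlternatingMap.ofSubsingleton ℝ V ℝ 0 ((innerₗ V).flip x)

/-- A complex-valued one-form from an `ℝ`-linear map into `ℂ`. -/
def cOneForm (f : V →ₗ[ℝ] ℂ) : V [⋀^Fin 1]→ₗ[ℝ] ℂ :=
  AlternatingMap.ofSubsingleton ℝ V ℂ 0 f

/-- The complex one-form `x + i·y`, i.e. `w ↦ ⟪w, x⟫ + i ⟪w, y⟫`. -/
def cplxPair (x y : V) : V →ₗ[ℝ] ℂ :=
  Complex.ofRealAm.toLinearMap ∘ₗ ((innerₗ V).flip x)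
    + Complex.I • (Complex.ofRealAm.toLinearMap ∘ₗ ((innerₗ V).flip y))

/-- Iterated wedge of complex one-forms. -/
def cprod : ∀ (k : ℕ), (Fin k → (V [⋀^Fin 1]→ₗ[ℝ] ℂ)) → V [⋀^Fin k]→ₗ[ℝ] ℂ
  | 0, _ => AlternatingMap.constOfIsEmpty ℝ V (Fin 0) 1
  | (k + 1), f => cwedge (cprod k (f ∘ Fin.castSucc)) (f (Fin.last k))

/-- The complex volume form `Ψ = e₁ℂ ∧ ⋯ ∧ eₙℂ` of the SU(n)-structure determined by
`I` and the adapted basis `e₁, …, eₙ, Ie₁, …, Ieₙ`. -/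
def Psi (n : ℕ) (J : V →ₗ[ℝ] V) (e : Fin n → V) : V [⋀^Fin n]→ₗ[ℝ] ℂ :=
  cprod n fun j => cOneForm (cplxPair (e j) (J (e j)))

/-- `ψ₊ = Re (e₁ℂ ∧ ⋯ ∧ eₙℂ)`. -/
def psiP (n : ℕ) (J : V →ₗ[ℝ] V) (e : Fin n → V) : V [⋀^Fin n]→ₗ[ℝ] ℝ :=
  Complex.reLm.compAlternatingMap (Psi n J e)

/-- `ψ₋ = Im (e₁ℂ ∧ ⋯ ∧ eₙℂ)`. -/
def psiM (n : ℕ) (J : V →ₗ[ℝ] V) (e : Fin n → V) : V [⋀^Fin n]→ₗ[ℝ] ℝ :=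
  Complex.imLm.compAlternatingMap (Psi n J e)

/-- Interior product `x ⌟ b` of a `p`-form by a vector. -/
def ic : ∀ {p : ℕ}, V → (V [⋀^Fin p]→ₗ[ℝ] ℝ) → V [⋀^Fin (p - 1)]→ₗ[ℝ] ℝ
  | 0, _, _ => 0
  | (_ + 1), x, a => a.curryLeft x

/-- `k`-th power `ω^k = ω ∧ ⋯ ∧ ω`. -/
def wpow (ω : V [⋀^Fin 2]→ₗ[ℝ] ℝ) : ∀ k : ℕ, V [⋀^Fin (2 * k)]→ₗ[ℝ] ℝ
  | 0 => AlternatingMap.constOfIsEmpty ℝ V (Fin 0) 1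
  | (k + 1) => wedge (wpow ω k) ω

/-- Inner product of `p`-forms: `⟨a,c⟩ = (1/p!) Σ a(f_{i₁},…) c(f_{i₁},…)`. -/
def formInner {ι : Type*} [Fintype ι] (B : ι → V) {p : ℕ}
    (a c : V [⋀^Fin p]→ₗ[ℝ] ℝ) : ℝ :=
  (p.factorial : ℝ)⁻¹ * ∑ f : Fin p → ι, a (fun i => B (f i)) * c (fun i => B (f i))

/-- The space `⟦λ^{p,0}⟧`: real `p`-forms with `I₍ᵢ₎I₍ⱼ₎ b = -b` for all `i < j`. -/
def IsLam (J : V →ₗ[ℝ] V) {p : ℕ} (a : V [⋀^Fin p]→ₗ[ℝ] ℝ) : Prop :=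
  ∀ (v : Fin p → V) (i j : Fin p), i < j →
    a (Function.update (Function.update v i (J (v i))) j (J (v j))) = - a v


set_option linter.unusedSectionVars false
set_option linter.unnecessarySeqFocus false
set_option linter.unusedVariables false

theorem vec1 (u : Fin 1 → V) : u = ![u 0] := by
  funext i; fin_cases i <;> rfl

theorem vec2 (u : Fin 2 → V) : u = ![u 0, u 1] := by
  funext i; fin_cases i <;> rfl

theorem dc11 {N : Type*} [AddCommGroup N] [Module ℝ N] (a b : V [⋀^Fin 1]→ₗ[ℝ] N)
    (w : Fin 1 ⊕ Fin 1 → V) :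
    a.domCoprod b w = a ![w (Sum.inl 0)] ⊗ₜ[ℝ] b ![w (Sum.inr 0)]
      - a ![w (Sum.inr 0)] ⊗ₜ[ℝ] b ![w (Sum.inl 0)] := by
  have h := MultilinearMap.domCoprod_alternization_eq (a := a) (b := b)
  simp only [Fintype.card_fin, Nat.factorial_one, mul_one, one_smul] at h
  rw [← h, MultilinearMap.alternatization_apply]
  rw [show (Finset.univ : Finset (Equiv.Perm (Fin 1 ⊕ Fin 1))) =
    {1, Equiv.swap (Sum.inl 0) (Sum.inr 0)} from by decide]
  rw [Finset.sum_pair (by decide),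
    Equiv.Perm.sign_swap (show (Sum.inl 0 : Fin 1 ⊕ Fin 1) ≠ Sum.inr 0 by decide)]
  simp only [MultilinearMap.domDomCongr_apply, MultilinearMap.domCoprod_apply,
    Equiv.Perm.sign_one, one_smul, Equiv.Perm.one_apply]
  rw [Units.neg_smul, one_smul, sub_eq_add_neg]
  have hv : ∀ x : V, ![x] = (fun _ : Fin 1 => x) := fun x => by funext i; fin_cases i; rfl
  simp [Fin.fin_one_eq_zero, hv]

theorem dc01 {N : Type*} [AddCommGroup N] [Module ℝ N] (a : V [⋀^Fin 0]→ₗ[ℝ] N)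
    (b : V [⋀^Fin 1]→ₗ[ℝ] N) (w : Fin 0 ⊕ Fin 1 → V) :
    a.domCoprod b w = a ![] ⊗ₜ[ℝ] b ![w (Sum.inr 0)] := by
  have h := MultilinearMap.domCoprod_alternization_eq (a := a) (b := b)
  simp only [Fintype.card_fin, Nat.factorial_one, Nat.factorial_zero, mul_one, one_smul] at h
  rw [← h, MultilinearMap.alternatization_apply]
  rw [show (Finset.univ : Finset (Equiv.Perm (Fin 0 ⊕ Fin 1))) = {1} from by decide]
  rw [Finset.sum_singleton]
  simp only [MultilinearMap.domDomCongr_apply, MultilinearMap.domCoprod_apply,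
    Equiv.Perm.sign_one, one_smul, Equiv.Perm.one_apply]
  have hv : ∀ x : V, ![x] = (fun _ : Fin 1 => x) := fun x => by funext i; fin_cases i; rfl
  have hv0 : (![] : Fin 0 → V) = (fun i : Fin 0 => w (Sum.inl i)) := by funext i; exact i.elim0
  simp [Fin.fin_one_eq_zero, hv, ← hv0]

theorem wedge_apply (a b : V [⋀^Fin 1]→ₗ[ℝ] ℝ) (v : Fin 2 → V) :
    wedge a b v = a ![v 0] * b ![v 1] - a ![v 1] * b ![v 0] := by
  unfold wedge
  rw [AlternatingMap.domDomCongr_apply, LinearMap.compAlternatingMap_apply, dc11]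
  rw [map_sub]
  simp only [LinearEquiv.coe_coe, TensorProduct.lid_tmul, smul_eq_mul]
  rfl

theorem cwedge_apply (a b : V [⋀^Fin 1]→ₗ[ℝ] ℂ) (v : Fin 2 → V) :
    cwedge a b v = a ![v 0] * b ![v 1] - a ![v 1] * b ![v 0] := by
  unfold cwedge
  rw [AlternatingMap.domDomCongr_apply, LinearMap.compAlternatingMap_apply, dc11]
  rw [map_sub]
  simp only [LinearMap.mul'_apply]
  rfl

theorem cwedge0_apply (c : V [⋀^Fin 1]→ₗ[ℝ] ℂ) (v : Fin (0 + 1) → V) :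
    cwedge (AlternatingMap.constOfIsEmpty ℝ V (Fin 0) 1) c v = c ![v 0] := by
  unfold cwedge
  rw [AlternatingMap.domDomCongr_apply, LinearMap.compAlternatingMap_apply, dc01]
  simp only [LinearMap.mul'_apply, AlternatingMap.constOfIsEmpty_apply, Function.const_apply,
    one_mul]
  rfl

theorem cplxPair_apply (x y v : V) :
    cplxPair x y v = (⟪v, x⟫ : ℂ) + Complex.I * (⟪v, y⟫ : ℂ) := by
  simp [cplxPair, innerₗ, innerₛₗ_apply_apply]
  rfl

theorem cOneForm_apply (f : V →ₗ[ℝ] ℂ) (v : Fin 1 → V) : cOneForm f v = f (v 0) := by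
  rfl

theorem Psi_apply (J : V →ₗ[ℝ] V) (e : Fin 2 → V) (x y : V) :
    Psi 2 J e ![x, y] =
      cplxPair (e 0) (J (e 0)) x * cplxPair (e 1) (J (e 1)) y
        - cplxPair (e 0) (J (e 0)) y * cplxPair (e 1) (J (e 1)) x := by
  have hP : Psi 2 J e = cwedge (cwedge (AlternatingMap.constOfIsEmpty ℝ V (Fin 0) 1)
      (cOneForm (cplxPair (e 0) (J (e 0))))) (cOneForm (cplxPair (e 1) (J (e 1)))) := by
    simp [Psi, cprod]
  rw [hP, cwedge_apply, cwedge0_apply, cwedge0_apply]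
  simp [cOneForm_apply]

theorem psiP_apply (J : V →ₗ[ℝ] V) (e : Fin 2 → V) (x y : V) :
    psiP 2 J e ![x, y] =
      (⟪x, e 0⟫ * ⟪y, e 1⟫ - ⟪x, J (e 0)⟫ * ⟪y, J (e 1)⟫)
        - (⟪y, e 0⟫ * ⟪x, e 1⟫ - ⟪y, J (e 0)⟫ * ⟪x, J (e 1)⟫) := by
  show (Psi 2 J e ![x, y]).re = _
  rw [Psi_apply]
  simp only [cplxPair_apply, Complex.mul_re, Complex.sub_re, Complex.add_re, Complex.add_im,
    Complex.mul_im, Complex.ofReal_re, Complex.ofReal_im, Complex.I_re, Complex.I_im]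
  ring

theorem psiM_apply (J : V →ₗ[ℝ] V) (e : Fin 2 → V) (x y : V) :
    psiM 2 J e ![x, y] =
      (⟪x, e 0⟫ * ⟪y, J (e 1)⟫ + ⟪x, J (e 0)⟫ * ⟪y, e 1⟫)
        - (⟪y, e 0⟫ * ⟪x, J (e 1)⟫ + ⟪y, J (e 0)⟫ * ⟪x, e 1⟫) := by
  show (Psi 2 J e ![x, y]).im = _
  rw [Psi_apply]
  simp only [cplxPair_apply, Complex.mul_re, Complex.sub_im, Complex.add_re, Complex.add_im,
    Complex.mul_im, Complex.ofReal_re, Complex.ofReal_im, Complex.I_re, Complex.I_im]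
  ring

theorem ic2_apply (a : V [⋀^Fin 2]→ₗ[ℝ] ℝ) (x y : V) : ic x a ![y] = a ![x, y] := by
  show a (Fin.cons x ![y]) = a ![x, y]
  congr 1

theorem two_swap (c : V [⋀^Fin 2]→ₗ[ℝ] ℝ) (x y : V) : c ![y, x] = - c ![x, y] := by
  have h := c.map_swap ![x, y] (show (0 : Fin 2) ≠ 1 by decide)
  rw [← h]
  congr 1
  funext i; fin_cases i <;> simp [Equiv.swap_apply_left, Equiv.swap_apply_right]

theorem two_same (c : V [⋀^Fin 2]→ₗ[ℝ] ℝ) (x : V) : c ![x, x] = 0 :=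
  c.map_eq_zero_of_eq ![x, x] (by simp) (show (0 : Fin 2) ≠ 1 by decide)

theorem two_neg_snd (c : V [⋀^Fin 2]→ₗ[ℝ] ℝ) (x y : V) : c ![x, -y] = - c ![x, y] := by
  have h1 : ![x, -y] = Function.update ![x, y] 1 ((-1 : ℝ) • y) := by
    funext i; fin_cases i <;> simp
  have h2 : ![x, y] = Function.update ![x, y] 1 y := by
    funext i; fin_cases i <;> simp
  rw [h1, c.map_update_smul ![x, y] 1 (-1 : ℝ) y, ← h2, neg_one_smul]

theorem altSum_apply {ι : Type*} (s : Finset ι) (f : ι → (V [⋀^Fin 2]→ₗ[ℝ] ℝ))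
    (v : Fin 2 → V) : (∑ i ∈ s, f i) v = ∑ i ∈ s, f i v := by
  induction s using Finset.cons_induction with
  | empty => simp
  | cons a s ha ih => simp [Finset.sum_cons, AlternatingMap.add_apply, ih]

theorem wedge_comb_left (a b c : V [⋀^Fin 1]→ₗ[ℝ] ℝ) (s t : ℝ) :
    wedge (s • a + t • b) c = s • wedge a c + t • wedge b c := by
  ext v
  rw [vec2 v]
  simp only [wedge_apply, AlternatingMap.add_apply, AlternatingMap.smul_apply, smul_eq_mul]
  have h0 : ((![v 0, v 1] : Fin 2 → V) 0) = v 0 := rfl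
  ring

theorem ic2_comb (a b : V [⋀^Fin 2]→ₗ[ℝ] ℝ) (x : V) (s t : ℝ) :
    ic x (s • a + t • b) = s • ic x a + t • ic x b := by
  ext v
  rw [vec1 v]
  simp only [ic2_apply, AlternatingMap.add_apply, AlternatingMap.smul_apply, smul_eq_mul]

def icc (u : V) (a : V [⋀^Fin 2]→ₗ[ℝ] ℝ) : V [⋀^Fin 1]→ₗ[ℝ] ℝ := ic u a

def wedge11 (a b : V [⋀^Fin 1]→ₗ[ℝ] ℝ) : V [⋀^Fin 2]→ₗ[ℝ] ℝ := wedge a b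

theorem wedge11_apply (a b : V [⋀^Fin 1]→ₗ[ℝ] ℝ) (x y : V) :
    wedge11 a b ![x, y] = a ![x] * b ![y] - a ![y] * b ![x] := by
  have h := wedge_apply a b ![x, y]
  simpa [wedge11, Matrix.cons_val_zero, Matrix.cons_val_one, Matrix.head_cons] using h

theorem icc_apply (a : V [⋀^Fin 2]→ₗ[ℝ] ℝ) (x y : V) : icc x a ![y] = a ![x, y] :=
  ic2_apply a x y

theorem wedge11_ic_apply (a b : V [⋀^Fin 2]→ₗ[ℝ] ℝ) (u x y : V) :
    wedge11 (icc u a) (icc u b) ![x, y]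
      = a ![u, x] * b ![u, y] - a ![u, y] * b ![u, x] := by
  rw [wedge11_apply, icc_apply, icc_apply, icc_apply, icc_apply]

theorem icc_comb (a b : V [⋀^Fin 2]→ₗ[ℝ] ℝ) (x : V) (s t : ℝ) :
    icc x (s • a + t • b) = s • icc x a + t • icc x b :=
  ic2_comb a b x s t

theorem wedge11_comb_left (a b c : V [⋀^Fin 1]→ₗ[ℝ] ℝ) (s t : ℝ) :
    wedge11 (s • a + t • b) c = s • wedge11 a c + t • wedge11 b c :=
  wedge_comb_left a b c s t

theorem lam2 {J : V →ₗ[ℝ] V} {a : V [⋀^Fin 2]→ₗ[ℝ] ℝ} (ha : IsLam J a) (x y : V) :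
    a ![J x, J y] = - a ![x, y] := by
  have h := ha ![x, y] 0 1 (by decide)
  have hupd : Function.update (Function.update ![x, y] 0 (J (![x, y] 0))) 1 (J (![x, y] 1))
      = ![J x, J y] := by
    funext i; fin_cases i <;> simp
  rwa [hupd] at h

theorem isLam_of {J : V →ₗ[ℝ] V} {a : V [⋀^Fin 2]→ₗ[ℝ] ℝ}
    (h : ∀ x y, a ![J x, J y] = - a ![x, y]) : IsLam J a := by
  intro v i j hij
  have hi : i = 0 := by omega
  have hj : j = 1 := by omega
  subst hi; subst hj
  have hupd : Function.update (Function.update v 0 (J (v 0))) 1 (J (v 1))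
      = ![J (v 0), J (v 1)] := by
    funext i; fin_cases i <;> simp
  rw [hupd, h (v 0) (v 1), ← vec2 v]

theorem isLam_smul {J : V →ₗ[ℝ] V} {a : V [⋀^Fin 2]→ₗ[ℝ] ℝ} (c : ℝ) (ha : IsLam J a) :
    IsLam J (c • a) := by
  intro v i j hij
  simp only [AlternatingMap.smul_apply, ha v i j hij, smul_eq_mul, smul_neg, mul_neg]

/-- Ξ₊ for n = 2. -/
def XiPlus4 (bas : OrthonormalBasis (Fin 2 ⊕ Fin 2) ℝ V)
    (ψm : V [⋀^Fin 2]→ₗ[ℝ] ℝ) (ξ : V →ₗ[ℝ] (V [⋀^Fin 2]→ₗ[ℝ] ℝ)) :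
    V → V [⋀^Fin 2]→ₗ[ℝ] ℝ :=
  fun X => (2 : ℝ)⁻¹ • ∑ i : Fin 2 ⊕ Fin 2, wedge (ic (bas i) (ξ X)) (ic (bas i) ψm)

/-- Ξ₋ for n = 2. -/
def XiMinus4 (bas : OrthonormalBasis (Fin 2 ⊕ Fin 2) ℝ V)
    (ψp : V [⋀^Fin 2]→ₗ[ℝ] ℝ) (ξ : V →ₗ[ℝ] (V [⋀^Fin 2]→ₗ[ℝ] ℝ)) :
    V → V [⋀^Fin 2]→ₗ[ℝ] ℝ :=
  fun X => (-(2 : ℝ)⁻¹) • ∑ i : Fin 2 ⊕ Fin 2, wedge (ic (bas i) (ξ X)) (ic (bas i) ψp)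

theorem XiPlus4_eq (bas : OrthonormalBasis (Fin 2 ⊕ Fin 2) ℝ V)
    (ψm : V [⋀^Fin 2]→ₗ[ℝ] ℝ) (ξ : V →ₗ[ℝ] (V [⋀^Fin 2]→ₗ[ℝ] ℝ)) (X : V) :
    XiPlus4 bas ψm ξ X
      = (2 : ℝ)⁻¹ • ∑ i : Fin 2 ⊕ Fin 2, wedge11 (icc (bas i) (ξ X)) (icc (bas i) ψm) :=
  rfl

theorem XiMinus4_eq (bas : OrthonormalBasis (Fin 2 ⊕ Fin 2) ℝ V)
    (ψp : V [⋀^Fin 2]→ₗ[ℝ] ℝ) (ξ : V →ₗ[ℝ] (V [⋀^Fin 2]→ₗ[ℝ] ℝ)) (X : V) :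
    XiMinus4 bas ψp ξ X
      = (-(2 : ℝ)⁻¹) • ∑ i : Fin 2 ⊕ Fin 2, wedge11 (icc (bas i) (ξ X)) (icc (bas i) ψp) :=
  rfl

set_option maxHeartbeats 2000000 in
theorem Xi_kernel_image_dim_four
{V : Type*} [NormedAddCommGroup V] [InnerProductSpace ℝ V]
    [FiniteDimensional ℝ V] (hdim : Module.finrank ℝ V = 4)
    (J : V →ₗ[ℝ] V) (hJ : ∀ v : V, J (J v) = -v)
    (hJorth : ∀ v w : V, ⟪J v, J w⟫ = ⟪v, w⟫)
    (bas : OrthonormalBasis (Fin 2 ⊕ Fin 2) ℝ V)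
    (hbas : ∀ j : Fin 2, bas (Sum.inr j) = J (bas (Sum.inl j)))
    (ω : V [⋀^Fin 2]→ₗ[ℝ] ℝ) (hω : ∀ x y : V, ω ![x, y] = ⟪x, J y⟫)
    (ψp ψm : V [⋀^Fin 2]→ₗ[ℝ] ℝ)
    (hψp : ψp = psiP 2 J (fun j => bas (Sum.inl j)))
    (hψm : ψm = psiM 2 J (fun j => bas (Sum.inl j))) :
    ({ξ : V →ₗ[ℝ] (V [⋀^Fin 2]→ₗ[ℝ] ℝ) | (∀ X, IsLam J (ξ X)) ∧ XiPlus4 bas ψm ξ = 0}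
        = {ξ | (∀ X, IsLam J (ξ X)) ∧ ∃ μ : V →ₗ[ℝ] ℝ, ∀ X, ξ X = μ X • ψm})
      ∧ ({ξ : V →ₗ[ℝ] (V [⋀^Fin 2]→ₗ[ℝ] ℝ) | (∀ X, IsLam J (ξ X)) ∧ XiMinus4 bas ψp ξ = 0}
        = {ξ | (∀ X, IsLam J (ξ X)) ∧ ∃ μ : V →ₗ[ℝ] ℝ, ∀ X, ξ X = μ X • ψp})
      ∧ (XiPlus4 bas ψm '' {ξ | ∀ X, IsLam J (ξ X)}
        = XiMinus4 bas ψp '' {ξ | ∀ X, IsLam J (ξ X)})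
      ∧ (XiPlus4 bas ψm '' {ξ | ∀ X, IsLam J (ξ X)}
        = {F : V → V [⋀^Fin 2]→ₗ[ℝ] ℝ | ∃ μ : V →ₗ[ℝ] ℝ, ∀ X, F X = μ X • ω}) := by
  have horf : ∀ i j, ⟪(bas i : V), bas j⟫ = if i = j then 1 else 0 :=
    fun i j => orthonormal_iff_ite.mp bas.orthonormal i j
  have hJ1 : ∀ j, J (bas (Sum.inl j)) = bas (Sum.inr j) := fun j => (hbas j).symm
  have hJ2 : ∀ j, J (bas (Sum.inr j)) = -bas (Sum.inl j) := fun j => by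
    rw [hbas j]; exact hJ _
  have hp : ∀ x y : V, ψp ![x, y] =
      (⟪x, bas (Sum.inl 0)⟫ * ⟪y, bas (Sum.inl 1)⟫
        - ⟪x, bas (Sum.inr 0)⟫ * ⟪y, bas (Sum.inr 1)⟫)
      - (⟪y, bas (Sum.inl 0)⟫ * ⟪x, bas (Sum.inl 1)⟫
        - ⟪y, bas (Sum.inr 0)⟫ * ⟪x, bas (Sum.inr 1)⟫) := by
    intro x y
    rw [hψp, psiP_apply]
    simp only [hJ1]
  have hm : ∀ x y : V, ψm ![x, y] =
      (⟪x, bas (Sum.inl 0)⟫ * ⟪y, bas (Sum.inr 1)⟫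
        + ⟪x, bas (Sum.inr 0)⟫ * ⟪y, bas (Sum.inl 1)⟫)
      - (⟪y, bas (Sum.inl 0)⟫ * ⟪x, bas (Sum.inr 1)⟫
        + ⟪y, bas (Sum.inr 0)⟫ * ⟪x, bas (Sum.inl 1)⟫) := by
    intro x y
    rw [hψm, psiM_apply]
    simp only [hJ1]
  have hJil : ∀ (x : V) j, ⟪J x, bas (Sum.inl j)⟫ = -⟪x, bas (Sum.inr j)⟫ := by
    intro x j
    have h' : bas (Sum.inl j) = -J (bas (Sum.inr j)) := by rw [hJ2 j, neg_neg]
    rw [h', inner_neg_right, hJorth]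
  have hJir : ∀ (x : V) j, ⟪J x, bas (Sum.inr j)⟫ = ⟪x, bas (Sum.inl j)⟫ := by
    intro x j; rw [← hJ1 j, hJorth]
  have hLp : IsLam J ψp := isLam_of (by intro x y; simp only [hp, hJil, hJir]; ring)
  have hLm : IsLam J ψm := isLam_of (by intro x y; simp only [hm, hJil, hJir]; ring)
  -- decomposition of forms in ⟦λ^{2,0}⟧
  have hdec : ∀ a : V [⋀^Fin 2]→ₗ[ℝ] ℝ, IsLam J a →
      a = a ![bas (Sum.inl 0), bas (Sum.inl 1)] • ψp
        + a ![bas (Sum.inl 0), bas (Sum.inr 1)] • ψm := by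
    intro a ha
    have r34 : a ![bas (Sum.inr 0), bas (Sum.inr 1)]
        = -a ![bas (Sum.inl 0), bas (Sum.inl 1)] := by
      have h := lam2 ha (bas (Sum.inl 0)) (bas (Sum.inl 1))
      rwa [hJ1 0, hJ1 1] at h
    have r13 : a ![bas (Sum.inl 0), bas (Sum.inr 0)] = 0 := by
      have h := lam2 ha (bas (Sum.inl 0)) (bas (Sum.inr 0))
      rw [hJ1 0, hJ2 0, two_neg_snd, two_swap, neg_neg] at h
      linarith
    have r24 : a ![bas (Sum.inl 1), bas (Sum.inr 1)] = 0 := by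
      have h := lam2 ha (bas (Sum.inl 1)) (bas (Sum.inr 1))
      rw [hJ1 1, hJ2 1, two_neg_snd, two_swap, neg_neg] at h
      linarith
    have r23 : a ![bas (Sum.inl 1), bas (Sum.inr 0)]
        = -a ![bas (Sum.inl 0), bas (Sum.inr 1)] := by
      have h := lam2 ha (bas (Sum.inl 0)) (bas (Sum.inr 1))
      rw [hJ1 0, hJ2 1, two_neg_snd, two_swap, neg_neg] at h
      linarith
    apply bas.toBasis.ext_alternating
    intro v hv
    have hvv : (fun i => bas.toBasis (v i)) = ![bas (v 0), bas (v 1)] := by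
      funext i; fin_cases i <;> simp [OrthonormalBasis.coe_toBasis]
    have hne : v 0 ≠ v 1 := fun h => (by decide : ¬((0 : Fin 2) = 1)) (hv h)
    rw [hvv]
    revert hne
    generalize v 0 = k
    generalize v 1 = l
    intro hne
    rcases k with k1 | k1 <;> rcases l with l1 | l1 <;> fin_cases k1 <;> fin_cases l1 <;>
      first
        | exact absurd rfl hne
        | (simp only [AlternatingMap.add_apply, AlternatingMap.smul_apply, hp, hm, horf,
            smul_eq_mul, reduceCtorEq, Sum.inl.injEq, Sum.inr.injEq, if_true, if_false,
            Fin.isValue]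
           norm_num
           try linarith [r34, r13, r24, r23,
             two_swap a (bas (Sum.inl 0)) (bas (Sum.inl 1)),
             two_swap a (bas (Sum.inl 0)) (bas (Sum.inr 0)),
             two_swap a (bas (Sum.inl 0)) (bas (Sum.inr 1)),
             two_swap a (bas (Sum.inl 1)) (bas (Sum.inr 0)),
             two_swap a (bas (Sum.inl 1)) (bas (Sum.inr 1)),
             two_swap a (bas (Sum.inr 0)) (bas (Sum.inr 1)),
             two_same a (bas (Sum.inl 0)), two_same a (bas (Sum.inl 1)),
             two_same a (bas (Sum.inr 0)), two_same a (bas (Sum.inr 1))])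

  have extC : ∀ (S T : V [⋀^Fin 2]→ₗ[ℝ] ℝ),
      (∀ k l : Fin 2 ⊕ Fin 2, k ≠ l → S ![bas k, bas l] = T ![bas k, bas l]) → S = T := by
    intro S T h
    apply bas.toBasis.ext_alternating
    intro v hv
    have hvv : (fun i => bas.toBasis (v i)) = ![bas (v 0), bas (v 1)] := by
      funext i; fin_cases i <;> simp [OrthonormalBasis.coe_toBasis]
    have hne : v 0 ≠ v 1 := fun h' => (by decide : ¬((0 : Fin 2) = 1)) (hv h')
    rw [hvv]
    exact h _ _ hne
  have C1 : (∑ i : Fin 2 ⊕ Fin 2, wedge11 (icc (bas i) ψp) (icc (bas i) ψm))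
      = (-2 : ℝ) • ω := by
    apply extC
    intro k l hne
    rw [altSum_apply, Fintype.sum_sum_type]
    rcases k with k1 | k1 <;> rcases l with l1 | l1 <;> fin_cases k1 <;> fin_cases l1 <;>
      first
        | exact absurd rfl hne
        | (simp only [Fin.sum_univ_two, wedge11_ic_apply, AlternatingMap.smul_apply, hp, hm,
             horf, hω, hJ1, hJ2, inner_neg_right, smul_eq_mul, reduceCtorEq, Sum.inl.injEq,
             Sum.inr.injEq, Fin.isValue]
           norm_num)
  have C2 : (∑ i : Fin 2 ⊕ Fin 2, wedge11 (icc (bas i) ψm) (icc (bas i) ψm))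
      = (0 : V [⋀^Fin 2]→ₗ[ℝ] ℝ) := by
    apply extC
    intro k l hne
    rw [altSum_apply, Fintype.sum_sum_type]
    rcases k with k1 | k1 <;> rcases l with l1 | l1 <;> fin_cases k1 <;> fin_cases l1 <;>
      first
        | exact absurd rfl hne
        | (simp only [Fin.sum_univ_two, wedge11_ic_apply, AlternatingMap.zero_apply, hp, hm,
             horf, reduceCtorEq, Sum.inl.injEq, Sum.inr.injEq, Fin.isValue]
           norm_num)
  have C3 : (∑ i : Fin 2 ⊕ Fin 2, wedge11 (icc (bas i) ψm) (icc (bas i) ψp))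
      = (2 : ℝ) • ω := by
    apply extC
    intro k l hne
    rw [altSum_apply, Fintype.sum_sum_type]
    rcases k with k1 | k1 <;> rcases l with l1 | l1 <;> fin_cases k1 <;> fin_cases l1 <;>
      first
        | exact absurd rfl hne
        | (simp only [Fin.sum_univ_two, wedge11_ic_apply, AlternatingMap.smul_apply, hp, hm,
             horf, hω, hJ1, hJ2, inner_neg_right, smul_eq_mul, reduceCtorEq, Sum.inl.injEq,
             Sum.inr.injEq, Fin.isValue]
           norm_num)
  have C4 : (∑ i : Fin 2 ⊕ Fin 2, wedge11 (icc (bas i) ψp) (icc (bas i) ψp))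
      = (0 : V [⋀^Fin 2]→ₗ[ℝ] ℝ) := by
    apply extC
    intro k l hne
    rw [altSum_apply, Fintype.sum_sum_type]
    rcases k with k1 | k1 <;> rcases l with l1 | l1 <;> fin_cases k1 <;> fin_cases l1 <;>
      first
        | exact absurd rfl hne
        | (simp only [Fin.sum_univ_two, wedge11_ic_apply, AlternatingMap.zero_apply, hp, hm,
             horf, reduceCtorEq, Sum.inl.injEq, Sum.inr.injEq, Fin.isValue]
           norm_num)
  have keyP0 : ∀ s t : ℝ,
      (∑ i : Fin 2 ⊕ Fin 2, wedge11 (icc (bas i) (s • ψp + t • ψm)) (icc (bas i) ψm))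
        = (-2 * s) • ω := by
    intro s t
    simp only [icc_comb, wedge11_comb_left]
    rw [Finset.sum_add_distrib, ← Finset.smul_sum, ← Finset.smul_sum, C1, C2,
      smul_zero, add_zero, smul_smul]
    rw [mul_comm]
  have keyM0 : ∀ s t : ℝ,
      (∑ i : Fin 2 ⊕ Fin 2, wedge11 (icc (bas i) (s • ψp + t • ψm)) (icc (bas i) ψp))
        = (2 * t) • ω := by
    intro s t
    simp only [icc_comb, wedge11_comb_left]
    rw [Finset.sum_add_distrib, ← Finset.smul_sum, ← Finset.smul_sum, C4, C3,
      smul_zero, zero_add, smul_smul]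
    rw [mul_comm]
  have XPval : ∀ (ξ : V →ₗ[ℝ] (V [⋀^Fin 2]→ₗ[ℝ] ℝ)) (hξ : ∀ X, IsLam J (ξ X)) (X : V),
      XiPlus4 bas ψm ξ X = (-((ξ X) ![bas (Sum.inl 0), bas (Sum.inl 1)])) • ω := by
    intro ξ hξ X
    have h := hdec (ξ X) (hξ X)
    rw [XiPlus4_eq]
    conv_lhs => rw [h]
    rw [keyP0, smul_smul]
    congr 1
    ring
  have XMval : ∀ (ξ : V →ₗ[ℝ] (V [⋀^Fin 2]→ₗ[ℝ] ℝ)) (hξ : ∀ X, IsLam J (ξ X)) (X : V),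
      XiMinus4 bas ψp ξ X = (-((ξ X) ![bas (Sum.inl 0), bas (Sum.inr 1)])) • ω := by
    intro ξ hξ X
    have h := hdec (ξ X) (hξ X)
    rw [XiMinus4_eq]
    conv_lhs => rw [h]
    rw [keyM0, smul_smul]
    congr 1
    ring
  have hp12 : ψp ![bas (Sum.inl 0), bas (Sum.inl 1)] = 1 := by
    simp [hp, horf]
    try norm_num
  have hp14 : ψp ![bas (Sum.inl 0), bas (Sum.inr 1)] = 0 := by
    simp [hp, horf]
    try norm_num
  have hm12 : ψm ![bas (Sum.inl 0), bas (Sum.inl 1)] = 0 := by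
    simp [hm, horf]
    try norm_num
  have hm14 : ψm ![bas (Sum.inl 0), bas (Sum.inr 1)] = 1 := by
    simp [hm, horf]
    try norm_num
  have hωval : ω ![bas (Sum.inl 0), bas (Sum.inr 0)] = -1 := by
    rw [hω, hJ2 0, inner_neg_right, horf]
    norm_num
  have hωker : ∀ r : ℝ, r • ω = 0 → r = 0 := by
    intro r hr
    have h := congrArg (fun f : V [⋀^Fin 2]→ₗ[ℝ] ℝ => f ![bas (Sum.inl 0), bas (Sum.inr 0)]) hr
    simp only [AlternatingMap.smul_apply, AlternatingMap.zero_apply, hωval,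
      smul_eq_mul] at h
    linarith
  refine ⟨?_, ?_, ?_, ?_⟩
  · ext ξ
    simp only [Set.mem_setOf_eq]
    constructor
    · rintro ⟨hL, h0⟩
      refine ⟨hL, ⟨⟨⟨fun X => (ξ X) ![bas (Sum.inl 0), bas (Sum.inr 1)], ?_⟩, ?_⟩, ?_⟩⟩
      · intro x y; simp only [map_add, AlternatingMap.add_apply]
      · intro c x; simp only [map_smul, AlternatingMap.smul_apply, smul_eq_mul,
          RingHom.id_apply]
      · intro X
        have hs : (ξ X) ![bas (Sum.inl 0), bas (Sum.inl 1)] = 0 := by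
          have h := congrFun h0 X
          rw [XPval ξ hL X] at h
          have h' := hωker _ (by rw [h]; rfl)
          linarith
        conv_lhs => rw [hdec (ξ X) (hL X)]
        rw [hs, zero_smul, zero_add]
        rfl
    · rintro ⟨hL, μ, hμ⟩
      refine ⟨hL, ?_⟩
      funext X
      rw [XPval ξ hL X, hμ X]
      simp only [AlternatingMap.smul_apply, hm12, smul_eq_mul, mul_zero, neg_zero, zero_smul]
      rfl
  · ext ξ
    simp only [Set.mem_setOf_eq]
    constructor
    · rintro ⟨hL, h0⟩
      refine ⟨hL, ⟨⟨⟨fun X => (ξ X) ![bas (Sum.inl 0), bas (Sum.inl 1)], ?_⟩, ?_⟩, ?_⟩⟩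
      · intro x y; simp only [map_add, AlternatingMap.add_apply]
      · intro c x; simp only [map_smul, AlternatingMap.smul_apply, smul_eq_mul,
          RingHom.id_apply]
      · intro X
        have hs : (ξ X) ![bas (Sum.inl 0), bas (Sum.inr 1)] = 0 := by
          have h := congrFun h0 X
          rw [XMval ξ hL X] at h
          have h' := hωker _ (by rw [h]; rfl)
          linarith
        conv_lhs => rw [hdec (ξ X) (hL X)]
        rw [hs, zero_smul, add_zero]
        rfl
    · rintro ⟨hL, μ, hμ⟩
      refine ⟨hL, ?_⟩
      funext X
      rw [XMval ξ hL X, hμ X]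
      simp only [AlternatingMap.smul_apply, hp14, smul_eq_mul, mul_zero, neg_zero, zero_smul]
      rfl
  · have ImP : XiPlus4 bas ψm '' {ξ | ∀ X, IsLam J (ξ X)}
        = {F : V → V [⋀^Fin 2]→ₗ[ℝ] ℝ | ∃ μ : V →ₗ[ℝ] ℝ, ∀ X, F X = μ X • ω} := by
      ext F
      constructor
      · rintro ⟨ξ, hξ, rfl⟩
        refine ⟨⟨⟨fun X => -((ξ X) ![bas (Sum.inl 0), bas (Sum.inl 1)]), ?_⟩, ?_⟩, ?_⟩
        · intro x y
          simp only [map_add, AlternatingMap.add_apply]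
          ring
        · intro c x
          simp only [map_smul, AlternatingMap.smul_apply, smul_eq_mul, RingHom.id_apply]
          ring
        · intro X
          rw [XPval ξ hξ X]
          rfl
      · rintro ⟨μ, hF⟩
        refine ⟨LinearMap.smulRight (-μ) ψp, fun X => isLam_smul _ hLp, ?_⟩
        funext X
        rw [XPval _ (fun X => isLam_smul _ hLp) X, hF X]
        show (-((((-μ) X : ℝ) • ψp) ![bas (Sum.inl 0), bas (Sum.inl 1)])) • ω = _
        rw [AlternatingMap.smul_apply, hp12]
        simp
    have ImM : XiMinus4 bas ψp '' {ξ | ∀ X, IsLam J (ξ X)}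
        = {F : V → V [⋀^Fin 2]→ₗ[ℝ] ℝ | ∃ μ : V →ₗ[ℝ] ℝ, ∀ X, F X = μ X • ω} := by
      ext F
      constructor
      · rintro ⟨ξ, hξ, rfl⟩
        refine ⟨⟨⟨fun X => -((ξ X) ![bas (Sum.inl 0), bas (Sum.inr 1)]), ?_⟩, ?_⟩, ?_⟩
        · intro x y
          simp only [map_add, AlternatingMap.add_apply]
          ring
        · intro c x
          simp only [map_smul, AlternatingMap.smul_apply, smul_eq_mul, RingHom.id_apply]
          ring
        · intro X
          rw [XMval ξ hξ X]
          rfl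
      · rintro ⟨μ, hF⟩
        refine ⟨LinearMap.smulRight (-μ) ψm, fun X => isLam_smul _ hLm, ?_⟩
        funext X
        rw [XMval _ (fun X => isLam_smul _ hLm) X, hF X]
        show (-((((-μ) X : ℝ) • ψm) ![bas (Sum.inl 0), bas (Sum.inr 1)])) • ω = _
        rw [AlternatingMap.smul_apply, hm14]
        simp
    exact ImP.trans ImM.symm
  · ext F
    constructor
    · rintro ⟨ξ, hξ, rfl⟩
      refine ⟨⟨⟨fun X => -((ξ X) ![bas (Sum.inl 0), bas (Sum.inl 1)]), ?_⟩, ?_⟩, ?_⟩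
      · intro x y
        simp only [map_add, AlternatingMap.add_apply]
        ring
      · intro c x
        simp only [map_smul, AlternatingMap.smul_apply, smul_eq_mul, RingHom.id_apply]
        ring
      · intro X
        rw [XPval ξ hξ X]
        rfl
    · rintro ⟨μ, hF⟩
      refine ⟨LinearMap.smulRight (-μ) ψp, fun X => isLam_smul _ hLp, ?_⟩
      funext X
      rw [XPval _ (fun X => isLam_smul _ hLp) X, hF X]
      show (-((((-μ) X : ℝ) • ψp) ![bas (Sum.inl 0), bas (Sum.inl 1)])) • ω = _
      rw [AlternatingMap.smul_apply, hp12]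
      simp

end SUnPaper
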